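/- Let G be a finite group and H an ICΦ-subgroup of G with G' ≤ H, where G' is the derived subgroup of G. Then G is nilpotent. -/

import Mathlib

/-- `H` is an `ICΦ`-subgroup of `G` if `H ∩ [H,G] ≤ Φ(H)`. -/
def IsICPhi {G : Type*} [Group G] (H : Subgroup G) : Prop :=
  H ⊓ ⁅H, (⊤ : Subgroup G)⁆ ≤ (frattini ↥H).map H.subtype

open Subgroup
open scoped commutatorElement

/-- A subgroup containing the commutator subgroup is normal. -/
lemma aux_normal_of_commutator_le {G : Type*} [Group G] {H : Subgroup G}
    (h : commutator G ≤ H) : H.Normal := by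
  constructor
  intro n hn g
  have hc : ⁅g, n⁆ ∈ H :=
    h (Subgroup.commutator_mem_commutator (mem_top g) (mem_top n))
  have := mul_mem hc hn
  rwa [commutatorElement_def, inv_mul_cancel_right] at this

/-- The Frattini subgroup of a normal subgroup is contained in the Frattini subgroup. -/
lemma aux_map_frattini_le {G : Type*} [Group G] [Finite G] (H : Subgroup G) [H.Normal] :
    (frattini ↥H).map H.subtype ≤ frattini G := by
  set F := (frattini ↥H).map H.subtype with hFdef
  have hFH : F ≤ H := map_subtype_le _
  have hFnormal : F.Normal := inferInstance
  rw [frattini, Order.radical]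
  refine le_iInf₂ fun M hM => ?_
  by_contra hFM
  -- then M ⊔ F = ⊤
  have htop : M ⊔ F = ⊤ := hM.2 _ (left_lt_sup.mpr hFM)
  -- H = (H ⊓ M) ⊔ F
  have hH : H = (H ⊓ M) ⊔ F := by
    apply le_antisymm
    · intro h hh
      have : h ∈ M ⊔ F := htop ▸ mem_top h
      rw [← SetLike.mem_coe, Subgroup.mul_normal] at this
      obtain ⟨m, hm, f, hf, rfl⟩ := this
      have hmH : m ∈ H := by
        have : (m * f) * f⁻¹ ∈ H := mul_mem hh (inv_mem (hFH hf))
        simpa using this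
      exact mul_mem (le_sup_left (a := H ⊓ M) (b := F) ⟨hmH, hm⟩)
        (le_sup_right (a := H ⊓ M) hf)
    · exact sup_le (inf_le_left) hFH
  -- pull back into H
  have hsub : (H ⊓ M).subgroupOf H ⊔ F.subgroupOf H = ⊤ := by
    rw [← subgroupOf_sup inf_le_left hFH, ← hH, subgroupOf_self]
  have hFsub : F.subgroupOf H = frattini ↥H := by
    rw [hFdef, subgroupOf, comap_map_eq_self_of_injective H.subtype_injective]
  rw [hFsub] at hsub
  have : (H ⊓ M).subgroupOf H = ⊤ := frattini_nongenerating hsub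
  have hHM : H ≤ H ⊓ M := subgroupOf_eq_top.mp this
  exact hFM (hFH.trans ((hHM.trans inf_le_right)))

/-- The lower central series of a quotient is the image of the lower central series. -/
lemma aux_lcs_surj {G H : Type*} [Group G] [Group H] (f : G →* H)
    (hf : Function.Surjective f) (n : ℕ) :
    Subgroup.lowerCentralSeries (⊤ : Subgroup H) n ≤ (Subgroup.lowerCentralSeries (⊤ : Subgroup G) n).map f := by
  induction n with
  | zero =>
      simpa using (Subgroup.map_top_of_surjective f hf).ge
  | succ n ih =>
      show ⁅Subgroup.lowerCentralSeries (⊤ : Subgroup H) n, (⊤ : Subgroup H)⁆ ≤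
        Subgroup.map f ⁅Subgroup.lowerCentralSeries (⊤ : Subgroup G) n, (⊤ : Subgroup G)⁆
      calc ⁅Subgroup.lowerCentralSeries (⊤ : Subgroup H) n, (⊤ : Subgroup H)⁆
          ≤ ⁅(Subgroup.lowerCentralSeries (⊤ : Subgroup G) n).map f, Subgroup.map f ⊤⁆ := by
            exact Subgroup.commutator_mono ih
              (by rw [Subgroup.map_top_of_surjective f hf])
        _ = Subgroup.map f ⁅Subgroup.lowerCentralSeries (⊤ : Subgroup G) n, (⊤ : Subgroup G)⁆ :=
            (Subgroup.map_commutator _ _ _).symm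

/-- Gaschütz: if `G / Φ(G)` is nilpotent then `G` is nilpotent. -/
lemma aux_gaschutz {G : Type*} [Group G] [Finite G]
    (h : Group.IsNilpotent (G ⧸ frattini G)) : Group.IsNilpotent G := by
  have hq := (isNilpotent_of_finite_tfae (G := G)).out 0 3
  rw [hq]; clear hq
  intro p hp P
  haveI := hp
  set Φ := frattini G with hΦdef
  have hmk : Function.Surjective (QuotientGroup.mk' Φ) := QuotientGroup.mk'_surjective Φ
  -- the image of P in G/Φ is a Sylow subgroup, hence normal
  let Q : Sylow p (G ⧸ Φ) := P.mapSurjective hmk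
  have hQnormal : (Q : Subgroup (G ⧸ Φ)).Normal := by
    have := (isNilpotent_of_finite_tfae (G := G ⧸ Φ)).out 0 3
    rw [this] at h
    exact h p hp Q
  -- N := P ⊔ Φ is normal in G
  set N : Subgroup G := (Q : Subgroup (G ⧸ Φ)).comap (QuotientGroup.mk' Φ) with hNdef
  haveI hNnormal : N.Normal := Subgroup.normal_comap _
  have hN : N = ↑P ⊔ Φ := by
    rw [hNdef]
    show ((P : Subgroup G).map (QuotientGroup.mk' Φ)).comap (QuotientGroup.mk' Φ) = ↑P ⊔ Φ
    rw [comap_map_eq, QuotientGroup.ker_mk']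
  have hPN : (P : Subgroup G) ≤ N := hN ▸ le_sup_left
  -- Frattini argument
  have hfr : Subgroup.normalizer ((P : Subgroup G) : Set G) ⊔ N = ⊤ := Sylow.normalizer_sup_eq_top' P hPN
  have hfr2 : Subgroup.normalizer ((P : Subgroup G) : Set G) ⊔ Φ = ⊤ := by
    rw [hN, ← sup_assoc, sup_of_le_left Subgroup.le_normalizer] at hfr
    exact hfr
  exact normalizer_eq_top_iff.mp (frattini_nongenerating hfr2)

theorem stmt1 {G : Type*} [Group G] [Finite G] (H : Subgroup G)
    (hIC : IsICPhi H) (hle : commutator G ≤ H) : Group.IsNilpotent G := by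
  haveI : H.Normal := aux_normal_of_commutator_le hle
  -- [H, G] ≤ H, so H ⊓ [H,G] = [H,G] and thus [H,G] ≤ Φ(H) ≤ Φ(G)
  have hHG : ⁅H, (⊤ : Subgroup G)⁆ ≤ H :=
    (Subgroup.commutator_mono le_top le_rfl).trans hle
  have h1 : ⁅H, (⊤ : Subgroup G)⁆ ≤ (frattini ↥H).map H.subtype := by
    intro x hx
    exact hIC ⟨hHG hx, hx⟩
  have h2 : ⁅H, (⊤ : Subgroup G)⁆ ≤ frattini G := h1.trans (aux_map_frattini_le H)
  -- the third term of the lower central series is inside Φ(G)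
  have h3 : Subgroup.lowerCentralSeries (⊤ : Subgroup G) 2 ≤ frattini G := by
    have : Subgroup.lowerCentralSeries (⊤ : Subgroup G) 2 = ⁅commutator G, (⊤ : Subgroup G)⁆ := by
      show ⁅Subgroup.lowerCentralSeries (⊤ : Subgroup G) 1, (⊤ : Subgroup G)⁆ = _
      rw [_root_.lowerCentralSeries_one]
    rw [this]
    exact (Subgroup.commutator_mono hle le_rfl).trans h2
  -- hence G/Φ(G) is nilpotent
  have hq : Group.IsNilpotent (G ⧸ frattini G) := by
    rw [_root_.nilpotent_iff_lowerCentralSeries]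
    refine ⟨2, ?_⟩
    rw [eq_bot_iff]
    refine (aux_lcs_surj (QuotientGroup.mk' (frattini G))
      (QuotientGroup.mk'_surjective _) 2).trans ?_
    rw [← QuotientGroup.ker_mk' (frattini G)] at h3
    exact (Subgroup.map_eq_bot_iff _).mpr h3 |>.le
  exact aux_gaschutz hq
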